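/- Let S ⊆ {1,…,m} be nonempty. Then rank(F^S) = 1 if and only if every two-element subset of S is critical and at least one one-element subset of S is non-critical. -/

import Mathlib

open Matrix

/-- The verification matrix `F := H (Hᴴ H)⁻¹ Hᴴ - Id`. -/
noncomputable def verif {m n : ℕ} (H : Matrix (Fin m) (Fin n) ℂ) :
    Matrix (Fin m) (Fin m) ℂ :=
  H * (Hᴴ * H)⁻¹ * Hᴴ - 1

/-- A set `S` of measurement (row) indices is critical if deleting the rows of `H`
with indices in `S` leaves a matrix of rank `< n`. -/
def IsCritical {m n : ℕ} (H : Matrix (Fin m) (Fin n) ℂ) (S : Finset (Fin m)) : Prop :=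
  (H.submatrix (fun i : {i : Fin m // i ∉ S} => (i : Fin m)) id).rank < n

/-- `F^S`: the submatrix of `F` formed by the columns with indices in `S`. -/
def colSub {m : ℕ} (F : Matrix (Fin m) (Fin m) ℂ) (S : Finset (Fin m)) :
    Matrix (Fin m) {j : Fin m // j ∈ S} ℂ :=
  F.submatrix id (fun j => (j : Fin m))

open ComplexOrder in
private lemma aux_rank_lt_iff {k : ℕ} {ι : Type*} [Fintype ι] (A : Matrix ι (Fin k) ℂ) :
    A.rank < k ↔ ∃ x : Fin k → ℂ, x ≠ 0 ∧ A *ᵥ x = 0 := by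
  have hrn := A.mulVecLin.finrank_range_add_finrank_ker
  simp only [Module.finrank_pi, Fintype.card_fin] at hrn
  have hker : (LinearMap.ker A.mulVecLin ≠ ⊥) ↔ ∃ x : Fin k → ℂ, x ≠ 0 ∧ A *ᵥ x = 0 := by
    rw [Submodule.ne_bot_iff]
    constructor
    · rintro ⟨x, hx, hx0⟩; exact ⟨x, hx0, hx⟩
    · rintro ⟨x, hx0, hx⟩; exact ⟨x, hx, hx0⟩
  rw [← hker]
  constructor
  · intro h hbot
    rw [hbot, finrank_bot] at hrn
    have : A.rank = k := by rw [Matrix.rank]; omega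
    omega
  · intro h
    have : Module.finrank ℂ (LinearMap.ker A.mulVecLin) ≠ 0 := by
      intro h0
      exact h (Submodule.finrank_eq_zero.mp h0)
    have : A.rank = Module.finrank ℂ (LinearMap.range A.mulVecLin) := rfl
    omega

private lemma aux_isUnit {k : ℕ} (A : Matrix (Fin k) (Fin k) ℂ) (h : A.rank = k) : IsUnit A := by
  rw [← Matrix.mulVec_injective_iff_isUnit]
  have : ∀ x, A *ᵥ x = 0 → x = 0 := by
    intro x hx
    by_contra hx0
    have := (aux_rank_lt_iff A).mpr ⟨x, hx0, hx⟩
    omega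
  intro x y hxy
  have hsub : A *ᵥ (x - y) = 0 := by rw [Matrix.mulVec_sub, hxy, sub_self]
  have h2 := ‹∀ x, A *ᵥ x = 0 → x = 0› _ hsub
  exact sub_eq_zero.mp h2

variable {m n : ℕ} (H : Matrix (Fin m) (Fin n) ℂ)

private lemma aux_crit_iff (T : Finset (Fin m)) :
    IsCritical H T ↔ ∃ x : Fin n → ℂ, x ≠ 0 ∧ ∀ i ∉ T, (H *ᵥ x) i = 0 := by
  rw [IsCritical, aux_rank_lt_iff]
  have hsub : ∀ x : Fin n → ℂ,
      (H.submatrix (fun i : {i : Fin m // i ∉ T} => (i : Fin m)) id) *ᵥ x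
        = fun i : {i : Fin m // i ∉ T} => (H *ᵥ x) (i : Fin m) := by
    intro x; ext i; simp [mulVec, submatrix, dotProduct]
  constructor
  · rintro ⟨x, hx0, hx⟩
    refine ⟨x, hx0, fun i hi => ?_⟩
    have := congrFun (hsub x ▸ hx) ⟨i, hi⟩
    simpa using this
  · rintro ⟨x, hx0, hx⟩
    refine ⟨x, hx0, ?_⟩
    rw [hsub]
    ext i
    exact hx i i.2

variable (hH : H.rank = n)
include hH

open ComplexOrder in
private lemma aux_unit : IsUnit (Hᴴ * H) :=
  aux_isUnit _ (by rw [Matrix.rank_conjTranspose_mul_self, hH])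

private lemma aux_verif_mul : verif H * H = 0 := by
  have hu := aux_unit H hH
  have hd : IsUnit (Hᴴ * H).det := (Matrix.isUnit_iff_isUnit_det _).mp hu
  rw [verif, Matrix.sub_mul, Matrix.one_mul, Matrix.mul_assoc, Matrix.mul_assoc,
    Matrix.nonsing_inv_mul _ hd, Matrix.mul_one, sub_self]

private lemma aux_hinj : ∀ x : Fin n → ℂ, H *ᵥ x = 0 → x = 0 := by
  intro x hx
  have hu := aux_unit H hH
  have h1 : (Hᴴ * H) *ᵥ x = 0 := by rw [← Matrix.mulVec_mulVec, hx, Matrix.mulVec_zero]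
  have hinj := Matrix.mulVec_injective_iff_isUnit.mpr hu
  have h2 : (Hᴴ * H) *ᵥ x = (Hᴴ * H) *ᵥ 0 := by rw [h1, Matrix.mulVec_zero]
  exact hinj h2

private lemma aux_key (v : Fin m → ℂ) :
    verif H *ᵥ v = 0 ↔ ∃ x : Fin n → ℂ, H *ᵥ x = v := by
  constructor
  · intro hv
    refine ⟨((Hᴴ * H)⁻¹ * Hᴴ) *ᵥ v, ?_⟩
    have : verif H *ᵥ v = (H * ((Hᴴ * H)⁻¹ * Hᴴ)) *ᵥ v - v := by
      rw [verif, Matrix.sub_mulVec, Matrix.one_mulVec, Matrix.mul_assoc]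
    rw [Matrix.mulVec_mulVec]
    rw [this] at hv
    linear_combination (norm := module) hv
  · rintro ⟨x, rfl⟩
    rw [Matrix.mulVec_mulVec, aux_verif_mul H hH, Matrix.zero_mulVec]

private lemma aux_singleton (i : Fin m) :
    IsCritical H {i} ↔ verif H *ᵥ Pi.single i 1 = 0 := by
  rw [aux_crit_iff, aux_key H hH]
  constructor
  · rintro ⟨x, hx0, hx⟩
    set c : ℂ := (H *ᵥ x) i with hc
    have hHx : H *ᵥ x = Pi.single i c := by
      ext k
      rw [Pi.single_apply]
      by_cases hk : k = i
      · subst hk; simp [hc]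
      · simp [hk, hx k (by simp [hk])]
    have hcne : c ≠ 0 := by
      intro h0
      apply hx0
      apply aux_hinj H hH
      rw [hHx, h0, Pi.single_zero]
    refine ⟨c⁻¹ • x, ?_⟩
    rw [Matrix.mulVec_smul, hHx, ← Pi.single_smul, smul_eq_mul, inv_mul_cancel₀ hcne]
  · rintro ⟨x, hx⟩
    refine ⟨x, ?_, ?_⟩
    · intro h0
      rw [h0, Matrix.mulVec_zero] at hx
      have := congrFun hx.symm i
      simp at this
    · intro k hk
      rw [hx, Pi.single_apply, if_neg (by simpa using hk)]

private lemma aux_pair (i j : Fin m) (hij : i ≠ j) :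
    IsCritical H {i, j} ↔ ∃ a b : ℂ, ¬(a = 0 ∧ b = 0) ∧
      a • (verif H *ᵥ Pi.single i 1) + b • (verif H *ᵥ Pi.single j 1) = 0 := by
  have hlin : ∀ a b : ℂ,
      a • (verif H *ᵥ Pi.single i 1) + b • (verif H *ᵥ Pi.single j 1)
        = verif H *ᵥ (Pi.single i a + Pi.single j b) := by
    intro a b
    rw [Matrix.mulVec_add, ← Matrix.mulVec_smul, ← Matrix.mulVec_smul,
      ← Pi.single_smul, ← Pi.single_smul, smul_eq_mul, smul_eq_mul, mul_one, mul_one]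
  rw [aux_crit_iff]
  constructor
  · rintro ⟨x, hx0, hx⟩
    set a : ℂ := (H *ᵥ x) i
    set b : ℂ := (H *ᵥ x) j
    have hHx : H *ᵥ x = Pi.single i a + Pi.single j b := by
      ext k
      rw [Pi.add_apply, Pi.single_apply, Pi.single_apply]
      by_cases hki : k = i
      · subst hki; rw [if_pos rfl, if_neg hij, add_zero]
      · by_cases hkj : k = j
        · subst hkj; rw [if_neg hki, if_pos rfl, zero_add]
        · rw [if_neg hki, if_neg hkj, add_zero]
          exact hx k (by simp [hki, hkj])
    refine ⟨a, b, ?_, ?_⟩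
    · rintro ⟨ha, hb⟩
      apply hx0
      apply aux_hinj H hH
      rw [hHx, ha, hb, Pi.single_zero, Pi.single_zero, add_zero]
    · rw [hlin, ← hHx, aux_key H hH]
      exact ⟨x, rfl⟩
  · rintro ⟨a, b, hab, heq⟩
    rw [hlin, aux_key H hH] at heq
    obtain ⟨x, hx⟩ := heq
    have hvne : (Pi.single i a + Pi.single j b : Fin m → ℂ) ≠ 0 := by
      intro h0
      apply hab
      constructor
      · have := congrFun h0 i
        simpa [Pi.single_apply, hij, (Ne.symm hij)] using this
      · have := congrFun h0 j
        simpa [Pi.single_apply, hij, (Ne.symm hij)] using this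
    refine ⟨x, ?_, ?_⟩
    · rintro rfl
      rw [Matrix.mulVec_zero] at hx
      exact hvne hx.symm
    · intro k hk
      simp only [Finset.mem_insert, Finset.mem_singleton, not_or] at hk
      rw [hx, Pi.add_apply, Pi.single_apply, Pi.single_apply, if_neg hk.1, if_neg hk.2, add_zero]

omit hH

/-- The `j`-th column of the verification matrix, as a vector. -/
noncomputable def auxCol (j : Fin m) : Fin m → ℂ :=
  verif H *ᵥ Pi.single j 1

include hH

private lemma aux_singleton' (i : Fin m) :
    IsCritical H {i} ↔ auxCol H i = 0 :=
  aux_singleton H hH i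

private lemma aux_pair' (i j : Fin m) (hij : i ≠ j) :
    IsCritical H {i, j} ↔ ∃ a b : ℂ, ¬(a = 0 ∧ b = 0) ∧
      a • auxCol H i + b • auxCol H j = 0 :=
  aux_pair H hH i j hij

omit hH

/-- `rank(F^S) = 1` iff every two-element subset of `S` is critical and at least one
one-element subset of `S` is non-critical. -/
theorem stmt18 {m n : ℕ} (H : Matrix (Fin m) (Fin n) ℂ) (hH : H.rank = n)
    (S : Finset (Fin m)) (hS : S.Nonempty) :
    (colSub (verif H) S).rank = 1 ↔
      (∀ T ⊆ S, T.card = 2 → IsCritical H T) ∧ (∃ i ∈ S, ¬ IsCritical H {i}) := by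
  have hc : ∀ j : Fin m, auxCol H j = (verif H)ᵀ j :=
    fun j => Matrix.mulVec_single_one _ _
  have hrange : Set.range (colSub (verif H) S).col = auxCol H '' ↑S := by
    ext v
    simp only [Set.mem_range, Set.mem_image]
    constructor
    · rintro ⟨⟨j, hj⟩, rfl⟩; exact ⟨j, hj, by rw [hc]; rfl⟩
    · rintro ⟨j, hj, rfl⟩; exact ⟨⟨j, hj⟩, by rw [hc]; rfl⟩
  rw [Matrix.rank_eq_finrank_span_cols, hrange]
  constructor
  · intro hV
    constructor
    · intro T hTS hT2
      obtain ⟨i, j, hij, rfl⟩ := Finset.card_eq_two.mp hT2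
      have hiS : i ∈ S := hTS (Finset.mem_insert_self _ _)
      have hjS : j ∈ S := hTS (by simp)
      have hci : auxCol H i ∈ Submodule.span ℂ (auxCol H '' ↑S) :=
        Submodule.subset_span ⟨i, hiS, rfl⟩
      have hcj : auxCol H j ∈ Submodule.span ℂ (auxCol H '' ↑S) :=
        Submodule.subset_span ⟨j, hjS, rfl⟩
      rw [aux_pair' H hH i j hij]
      by_cases hzi : auxCol H i = 0
      · exact ⟨1, 0, by simp, by rw [hzi]; simp⟩
      · have hle : Submodule.span ℂ {auxCol H i} ≤ Submodule.span ℂ (auxCol H '' ↑S) := by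
          rw [Submodule.span_singleton_le_iff_mem]; exact hci
        have heq : Submodule.span ℂ {auxCol H i} = Submodule.span ℂ (auxCol H '' ↑S) := by
          apply Submodule.eq_of_le_of_finrank_eq hle
          rw [finrank_span_singleton hzi, hV]
        obtain ⟨r, hr⟩ := Submodule.mem_span_singleton.mp (heq ▸ hcj)
        refine ⟨r, -1, by simp, ?_⟩
        rw [neg_one_smul, hr, add_neg_cancel]
    · by_contra hcon
      push_neg at hcon
      have hzero : ∀ i ∈ S, auxCol H i = 0 := by
        intro i hi
        exact (aux_singleton' H hH i).mp (hcon i hi)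
      have hsub : auxCol H '' ↑S ⊆ {0} := by
        rintro v ⟨j, hj, rfl⟩
        exact hzero j hj
      have hbot : Submodule.span ℂ (auxCol H '' ↑S) ≤ ⊥ := by
        rw [← Submodule.span_zero_singleton ℂ]
        exact Submodule.span_mono hsub
      rw [le_bot_iff] at hbot
      rw [hbot, finrank_bot] at hV
      exact one_ne_zero hV.symm
  · rintro ⟨hpairs, i₀, hi₀S, hi₀⟩
    have hci₀ : auxCol H i₀ ≠ 0 := fun h => hi₀ ((aux_singleton' H hH i₀).mpr h)
    have hspan : Submodule.span ℂ (auxCol H '' ↑S) = Submodule.span ℂ {auxCol H i₀} := by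
      apply le_antisymm
      · rw [Submodule.span_le]
        rintro v ⟨j, hjS, rfl⟩
        rw [SetLike.mem_coe]
        by_cases hji : j = i₀
        · subst hji; exact Submodule.mem_span_singleton_self _
        · have hT : ({i₀, j} : Finset (Fin m)) ⊆ S :=
            Finset.insert_subset hi₀S (Finset.singleton_subset_iff.mpr hjS)
          have hcard : ({i₀, j} : Finset (Fin m)).card = 2 :=
            Finset.card_pair (Ne.symm hji)
          have hcrit := hpairs _ hT hcard
          rw [aux_pair' H hH i₀ j (Ne.symm hji)] at hcrit
          obtain ⟨a, b, hab, heq⟩ := hcrit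
          have hb : b ≠ 0 := by
            rintro rfl
            have ha : a ≠ 0 := fun h => hab ⟨h, rfl⟩
            rw [zero_smul, add_zero] at heq
            exact hci₀ ((smul_eq_zero.mp heq).resolve_left ha)
          rw [Submodule.mem_span_singleton]
          refine ⟨b⁻¹ * (-a), ?_⟩
          have hbc : b • auxCol H j = (-a) • auxCol H i₀ := by
            linear_combination (norm := module) heq
          rw [mul_smul, ← hbc, smul_smul, inv_mul_cancel₀ hb, one_smul]
      · rw [Submodule.span_le, Set.singleton_subset_iff]
        exact Submodule.subset_span ⟨i₀, hi₀S, rfl⟩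
    rw [hspan, finrank_span_singleton hci₀]
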